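/- Let U ∈ SL(d,ℝ) with d = m + n, let R > 0, set P = ((1 + n^{−1}) √d · λ_d(A_R U ℤ^d))^n and Q = P·R. Then for every w ∈ ℝ^d the translated box w + ((0,1]^n × (0, P^{d/(mn)}]^m) contains at least one point of the lattice A_Q U ℤ^d. -/

import Mathlib

open MeasureTheory
open scoped ENNReal

/-- The `L^p` norm of a vector in `ℝ^ι`, for `p ∈ [1,∞]` (junk values otherwise). -/
noncomputable def lpNorm (p : ℝ≥0∞) {ι : Type*} [Fintype ι] (x : ι → ℝ) : ℝ :=
  ‖(WithLp.equiv p (ι → ℝ)).symm x‖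

/-- The Euclidean (`L²`) norm of a vector. -/
noncomputable def euclNorm {ι : Type*} [Fintype ι] (x : ι → ℝ) : ℝ :=
  Real.sqrt (∑ i, x i ^ 2)

/-- `cone(S) = {c • u : u ∈ S, c > 0}`. -/
def cone {m : ℕ} (S : Set (Fin m → ℝ)) : Set (Fin m → ℝ) :=
  {y | ∃ u ∈ S, ∃ c : ℝ, 0 < c ∧ y = c • u}

/-- `S` is an open subset of the unit (Euclidean) sphere of `ℝ^m`. -/
def IsOpenSubsetOfSphere {m : ℕ} (S : Set (Fin m → ℝ)) : Prop :=
  ∃ U : Set (Fin m → ℝ), IsOpen U ∧ S = U ∩ {u | euclNorm u = 1}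

/-- Matrix-vector multiplication, with the matrix given as `Fin m → Fin n → ℝ`. -/
def matVec {m n : ℕ} (B : Fin m → Fin n → ℝ) (x : Fin n → ℝ) : Fin m → ℝ :=
  fun i => ∑ j, B i j * x j

/-- The block matrix `U_B = [[Id_n, 0], [B, Id_m]]`, indexed by `Fin n ⊕ Fin m`. -/
def UB {m n : ℕ} (B : Fin m → Fin n → ℝ) :
    Matrix (Fin n ⊕ Fin m) (Fin n ⊕ Fin m) ℝ :=
  Matrix.fromBlocks 1 0 (Matrix.of B) 1

/-- The diagonal matrix `A_Q = diag(Q^{-1/n} Id_n, Q^{1/m} Id_m)`. -/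
noncomputable def AQ (m n : ℕ) (Q : ℝ) :
    Matrix (Fin n ⊕ Fin m) (Fin n ⊕ Fin m) ℝ :=
  Matrix.diagonal
    (Sum.elim (fun _ : Fin n => Q ^ (-(n : ℝ)⁻¹)) (fun _ : Fin m => Q ^ ((m : ℝ)⁻¹)))

/-- The lattice `Mℤ^d` generated by the columns of `M`. -/
def colLattice {ι : Type*} [Fintype ι] (M : Matrix ι ι ℝ) : Submodule ℤ (ι → ℝ) :=
  Submodule.span ℤ (Set.range fun j => fun i => M i j)

/-- The `i`-th successive minimum of a lattice `L ⊆ ℝ^ι`: the least `r > 0` such that `L`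
contains `i` linearly independent vectors of Euclidean norm at most `r`. -/
noncomputable def succMin {ι : Type*} [Fintype ι] (L : Submodule ℤ (ι → ℝ)) (i : ℕ) : ℝ :=
  sInf {r : ℝ | 0 < r ∧ ∃ v : Fin i → (ι → ℝ), (∀ j, v j ∈ L) ∧
    LinearIndependent ℝ v ∧ ∀ j, euclNorm (v j) ≤ r}

open Submodule Finset
open InnerProductSpace

private instance instWFLTFin (d : ℕ) : WellFoundedLT (Fin d) := inferInstance

section NP
variable {E : Type*} [NormedAddCommGroup E] [InnerProductSpace ℝ E]

private lemma inner_span_zero {w : E} {s : Set E} (h : ∀ u ∈ s, @inner ℝ _ _ w u = 0) :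
    ∀ z ∈ span ℝ s, @inner ℝ _ _ w z = 0 := by
  intro z hz
  induction hz using Submodule.span_induction with
  | mem u hu => exact h u hu
  | zero => simp
  | add _ _ _ _ h1 h2 => rw [inner_add_right, h1, h2, add_zero]
  | smul c _ _ h1 => rw [real_inner_smul_right, h1, mul_zero]

variable {d : ℕ} (v : Fin d → E)

private lemma inner_gs_self (j : Fin d) :
    @inner ℝ _ _ (gramSchmidt ℝ v j) (v j) = ‖gramSchmidt ℝ v j‖ ^ 2 := by
  conv_lhs => rw [gramSchmidt_def'' ℝ v j]
  rw [inner_add_right, real_inner_self_eq_norm_sq]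
  simp only [inner_sum, real_inner_smul_right]
  have h0 : ∀ i ∈ Finset.Iio j,
      @inner ℝ _ _ (gramSchmidt ℝ v j) (gramSchmidt ℝ v i) = 0 :=
    fun i hi => gramSchmidt_orthogonal ℝ v (Finset.mem_Iio.mp hi).ne'
  rw [Finset.sum_eq_zero (fun i hi => by rw [h0 i hi, mul_zero]), add_zero]

private lemma norm_gs_le (j : Fin d) : ‖gramSchmidt ℝ v j‖ ≤ ‖v j‖ := by
  have hd := gramSchmidt_def' ℝ v j
  set g := gramSchmidt ℝ v with hg
  set h := ∑ i ∈ Finset.Iio j, (ℝ ∙ g i).starProjection (v j) with hh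
  have hmem : h ∈ span ℝ (g '' Set.Iio j) := by
    refine Submodule.sum_mem _ fun i hi => ?_
    have : (orthogonalProjection (ℝ ∙ g i) (v j) : E) ∈ ℝ ∙ g i := SetLike.coe_mem _
    refine Submodule.span_mono ?_ this
    intro u hu
    rcases Set.mem_singleton_iff.mp hu with rfl
    exact Set.mem_image_of_mem _ (Finset.mem_Iio.mp hi)
  have horth : @inner ℝ _ _ (g j) h = 0 := by
    refine inner_span_zero (fun u hu => ?_) h hmem
    rcases hu with ⟨i, hi, rfl⟩
    exact gramSchmidt_orthogonal ℝ v (ne_of_gt hi)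
  have : ‖v j‖ ^ 2 = ‖g j‖ ^ 2 + ‖h‖ ^ 2 := by
    rw [hd]
    rw [norm_add_sq_real, horth]
    ring
  have h2 : ‖g j‖ ^ 2 ≤ ‖v j‖ ^ 2 := by nlinarith [sq_nonneg ‖h‖]
  calc ‖g j‖ = Real.sqrt (‖g j‖ ^ 2) := (Real.sqrt_sq (norm_nonneg _)).symm
    _ ≤ Real.sqrt (‖v j‖ ^ 2) := Real.sqrt_le_sqrt h2
    _ = ‖v j‖ := Real.sqrt_sq (norm_nonneg _)

open RealInnerProductSpace in
private lemma nearest_plane_aux {d : ℕ} (v : Fin d → E) (hv : LinearIndependent ℝ v) :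
    ∀ (j : ℕ), ∀ x ∈ span ℝ (v '' {i : Fin d | (i : ℕ) < j}),
      ∃ k : Fin d → ℤ, (∀ i : Fin d, j ≤ (i : ℕ) → k i = 0) ∧
        ‖x - ∑ i, (k i : ℝ) • v i‖ ^ 2 ≤
          (∑ i ∈ Finset.univ.filter (fun i : Fin d => (i : ℕ) < j), ‖v i‖ ^ 2) / 4 := by
  intro j
  induction j with
  | zero =>
    intro x hx
    have hset : (v '' {i : Fin d | (i : ℕ) < 0}) = ∅ := by simp
    rw [hset, Submodule.span_empty, Submodule.mem_bot] at hx
    refine ⟨0, fun i _ => rfl, ?_⟩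
    simp [hx]
  | succ j ih =>
    intro x hx
    by_cases hj : j < d
    · -- main case
      set J : Fin d := ⟨j, hj⟩ with hJdef
      set g : Fin d → E := gramSchmidt ℝ v with hgdef
      have hsetIic : {i : Fin d | (i : ℕ) < j + 1} = Set.Iic J := by
        ext i; simp [Fin.le_def, hJdef]
      have hsetIio : {i : Fin d | (i : ℕ) < j} = Set.Iio J := by
        ext i; simp [Fin.lt_def, hJdef]
      have hgJ : g J ≠ 0 := by rw [hgdef]; exact gramSchmidt_ne_zero J hv
      have hgJ2 : ‖g J‖ ^ 2 ≠ 0 := pow_ne_zero _ (norm_ne_zero_iff.mpr hgJ)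
      set c : ℝ := ⟪g J, x⟫ / ‖g J‖ ^ 2 with hcdef
      set t : ℤ := round c with htdef
      have horthIio : ∀ z ∈ span ℝ (g '' Set.Iio J), ⟪g J, z⟫ = (0 : ℝ) := by
        refine inner_span_zero fun u hu => ?_
        rcases hu with ⟨i, hi, rfl⟩
        exact gramSchmidt_orthogonal ℝ v (ne_of_gt hi)
      set y : E := x - (t : ℝ) • v J - (c - t) • g J with hydef
      have hc : c * ‖g J‖ ^ 2 = ⟪g J, x⟫ := by
        rw [hcdef]; exact div_mul_cancel₀ _ hgJ2
      have hyi : ⟪g J, y⟫ = (0 : ℝ) := by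
        rw [hydef, inner_sub_right, inner_sub_right, real_inner_smul_right,
          real_inner_smul_right, hgdef, inner_gs_self v J, ← hgdef,
          real_inner_self_eq_norm_sq]
        linear_combination -hc
      have hxIic : x ∈ span ℝ (g '' Set.Iic J) := by
        rw [hgdef, span_gramSchmidt_Iic]
        rw [hsetIic] at hx; exact hx
      have hymem : y ∈ span ℝ (g '' Set.Iic J) := by
        have hvJ : v J ∈ span ℝ (g '' Set.Iic J) := by
          rw [hgdef]; exact mem_span_gramSchmidt ℝ v le_rfl
        have hgJm : g J ∈ span ℝ (g '' Set.Iic J) :=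
          subset_span ⟨J, Set.self_mem_Iic, rfl⟩
        rw [hydef]
        exact sub_mem (sub_mem hxIic (smul_mem _ _ hvJ)) (smul_mem _ _ hgJm)
      have hyIio : y ∈ span ℝ (g '' Set.Iio J) := by
        rw [← Set.Iio_insert, Set.image_insert_eq, Submodule.span_insert] at hymem
        rcases Submodule.mem_sup.mp hymem with ⟨y1, hy1, y2, hy2, hsum⟩
        rcases Submodule.mem_span_singleton.mp hy1 with ⟨a, rfl⟩
        have h2 : ⟪g J, y2⟫ = (0 : ℝ) := horthIio y2 hy2
        have ha : a = 0 := by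
          have h3 := hyi
          rw [← hsum, inner_add_right, real_inner_smul_right,
            real_inner_self_eq_norm_sq, h2, add_zero] at h3
          exact (mul_eq_zero.mp h3).resolve_right hgJ2
        rw [← hsum, ha, zero_smul, zero_add]; exact hy2
      have hyv : y ∈ span ℝ (v '' {i : Fin d | (i : ℕ) < j}) := by
        rw [hsetIio, ← span_gramSchmidt_Iio ℝ v J, ← hgdef]; exact hyIio
      obtain ⟨k', hk's, hk'b⟩ := ih y hyv
      have hkJ : k' J = 0 := hk's J le_rfl
      refine ⟨Function.update k' J t, ?_, ?_⟩
      · intro i hi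
        have hne : i ≠ J := by
          intro h; rw [h, hJdef] at hi; simp at hi
        rw [Function.update_of_ne hne]
        exact hk's i (by omega)
      · have hfun : ∀ i, ((Function.update k' J t i : ℤ) : ℝ) • v i =
            Function.update (fun i => ((k' i : ℝ)) • v i) J ((t : ℝ) • v J) i := by
          intro i
          by_cases h : i = J
          · subst h; simp
          · simp [Function.update_of_ne h]
        have hsum : ∑ i, ((Function.update k' J t i : ℤ) : ℝ) • v i =
            (t : ℝ) • v J + ∑ i, (k' i : ℝ) • v i := by
          rw [Finset.sum_congr rfl fun i _ => hfun i,
            Finset.sum_update_of_mem (Finset.mem_univ J)]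
          congr 1
          rw [Finset.sum_eq_add_sum_sdiff_singleton_of_mem (Finset.mem_univ J)
            (fun i => ((k' i : ℝ)) • v i), hkJ]
          simp
        have heq : x - ∑ i, ((Function.update k' J t i : ℤ) : ℝ) • v i =
            (y - ∑ i, (k' i : ℝ) • v i) + (c - (t : ℝ)) • g J := by
          rw [hsum, hydef]; abel
        have hA : (y - ∑ i, (k' i : ℝ) • v i) ∈ span ℝ (g '' Set.Iio J) := by
          refine sub_mem hyIio ?_
          rw [hgdef, span_gramSchmidt_Iio]
          refine Submodule.sum_mem _ fun i _ => ?_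
          by_cases hij : (i : ℕ) < j
          · refine smul_mem _ _ (subset_span ⟨i, ?_, rfl⟩)
            simpa [Set.mem_Iio, Fin.lt_def, hJdef] using hij
          · rw [hk's i (by omega)]; simp
        have hinner0 : ⟪y - ∑ i, (k' i : ℝ) • v i, (c - (t : ℝ)) • g J⟫ = (0 : ℝ) := by
          rw [real_inner_smul_right, real_inner_comm, horthIio _ hA, mul_zero]
        rw [heq, norm_add_sq_real, hinner0]
        have hfilter : Finset.univ.filter (fun i : Fin d => (i : ℕ) < j + 1) =
            insert J (Finset.univ.filter fun i : Fin d => (i : ℕ) < j) := by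
          ext i; simp [Fin.ext_iff, hJdef]; omega
        rw [hfilter, Finset.sum_insert (by simp [hJdef])]
        have hnrm : ‖(c - (t : ℝ)) • g J‖ ^ 2 ≤ ‖v J‖ ^ 2 / 4 := by
          rw [norm_smul, Real.norm_eq_abs]
          have h1 : |c - (t : ℝ)| ≤ 1 / 2 := abs_sub_round c
          have h2 : ‖g J‖ ≤ ‖v J‖ := by rw [hgdef]; exact norm_gs_le v J
          have h3 : |c - (t : ℝ)| * ‖g J‖ ≤ (1 / 2) * ‖v J‖ :=
            mul_le_mul h1 h2 (norm_nonneg _) (by norm_num)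
          have h4 : (|c - (t : ℝ)| * ‖g J‖) ^ 2 ≤ ((1 / 2) * ‖v J‖) ^ 2 :=
            pow_le_pow_left₀ (by positivity) h3 2
          nlinarith [h4]
        linarith [hk'b]
    · -- j ≥ d
      have hseteq : {i : Fin d | (i : ℕ) < j + 1} = {i : Fin d | (i : ℕ) < j} := by
        ext i; have := i.isLt; simp; omega
      have hfeq : Finset.univ.filter (fun i : Fin d => (i : ℕ) < j + 1) =
          Finset.univ.filter (fun i : Fin d => (i : ℕ) < j) := by
        ext i; have := i.isLt; simp; omega
      rw [hseteq] at hx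
      obtain ⟨k, hk, hb⟩ := ih x hx
      exact ⟨k, fun i hi => hk i (by omega), by rwa [hfeq]⟩

end NP

section Covering
variable {E : Type*} [NormedAddCommGroup E] [InnerProductSpace ℝ E]

private lemma covering_E {d : ℕ} (v : Fin d → E) (hv : LinearIndependent ℝ v)
    (hspan : Submodule.span ℝ (Set.range v) = ⊤) (x : E) :
    ∃ k : Fin d → ℤ, ‖x - ∑ i, (k i : ℝ) • v i‖ ^ 2 ≤ (∑ i, ‖v i‖ ^ 2) / 4 := by
  have hset : {i : Fin d | (i : ℕ) < d} = Set.univ := by ext i; simpa using i.isLt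
  have hx : x ∈ Submodule.span ℝ (v '' {i : Fin d | (i : ℕ) < d}) := by
    rw [hset, Set.image_univ, hspan]; trivial
  obtain ⟨k, _, hb⟩ := nearest_plane_aux v hv d x hx
  refine ⟨k, hb.trans ?_⟩
  have hflt : Finset.univ.filter (fun i : Fin d => (i : ℕ) < d) = Finset.univ := by
    ext i; simpa using i.isLt
  rw [hflt]

private lemma euclNorm_nonneg {ι : Type*} [Fintype ι] (x : ι → ℝ) : 0 ≤ euclNorm x :=
  Real.sqrt_nonneg _

private lemma covering_pi {ι : Type*} [Fintype ι] {d : ℕ} (hd : Fintype.card ι = d)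
    (hd0 : 0 < d) (v : Fin d → (ι → ℝ)) (hv : LinearIndependent ℝ v) {r : ℝ}
    (hr : ∀ i, euclNorm (v i) ≤ r) (x : ι → ℝ) :
    ∃ k : Fin d → ℤ, euclNorm (x - ∑ i, (k i : ℝ) • v i) ^ 2 ≤ (d : ℝ) * r ^ 2 / 4 := by
  classical
  set φ : (ι → ℝ) ≃ₗ[ℝ] EuclideanSpace ℝ ι :=
    (EuclideanSpace.equiv ι ℝ).toLinearEquiv.symm with hφdef
  have hnorm : ∀ z : ι → ℝ, ‖φ z‖ = euclNorm z := by
    intro z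
    rw [EuclideanSpace.norm_eq, euclNorm]
    congr 1
    refine Finset.sum_congr rfl fun i _ => ?_
    have hz : φ z i = z i := rfl
    rw [hz, Real.norm_eq_abs, sq_abs]
  have hv' : LinearIndependent ℝ (fun i => φ (v i)) :=
    hv.map' (φ : (ι → ℝ) →ₗ[ℝ] EuclideanSpace ℝ ι)
      (LinearMap.ker_eq_bot_of_injective φ.injective)
  have hspan : Submodule.span ℝ (Set.range fun i => φ (v i)) = ⊤ := by
    have : Nonempty (Fin d) := ⟨⟨0, hd0⟩⟩
    exact hv'.span_eq_top_of_card_eq_finrank (by simp [finrank_euclideanSpace, hd])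
  obtain ⟨k, hk⟩ := covering_E _ hv' hspan (φ x)
  refine ⟨k, ?_⟩
  have h1 : φ x - ∑ i, (k i : ℝ) • φ (v i) = φ (x - ∑ i, (k i : ℝ) • v i) := by
    rw [map_sub, map_sum]
    simp_rw [_root_.map_smul]
  rw [h1, hnorm] at hk
  refine hk.trans ?_
  have h2 : ∀ i : Fin d, ‖φ (v i)‖ ^ 2 ≤ r ^ 2 := fun i => by
    rw [hnorm]; exact pow_le_pow_left₀ (euclNorm_nonneg _) (hr i) 2
  have h3 : (∑ i, ‖φ (v i)‖ ^ 2) ≤ ∑ _i : Fin d, r ^ 2 := Finset.sum_le_sum fun i _ => h2 i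
  have h4 : (∑ _i : Fin d, r ^ 2 : ℝ) = (d : ℝ) * r ^ 2 := by
    simp [Finset.sum_const, mul_comm]
  linarith [h3, h4.le]

private lemma abs_coord_le_euclNorm {ι : Type*} [Fintype ι] (x : ι → ℝ) (i : ι) :
    |x i| ≤ euclNorm x := by
  rw [euclNorm, ← Real.sqrt_sq_eq_abs]
  exact Real.sqrt_le_sqrt (Finset.single_le_sum (fun j _ => sq_nonneg (x j)) (Finset.mem_univ i))

end Covering

private def SMset {ι : Type*} [Fintype ι] (L : Submodule ℤ (ι → ℝ)) (i : ℕ) : Set ℝ :=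
  {r : ℝ | 0 < r ∧ ∃ v : Fin i → (ι → ℝ), (∀ j, v j ∈ L) ∧
    LinearIndependent ℝ v ∧ ∀ j, euclNorm (v j) ≤ r}

private lemma succMin_eq_sInf {ι : Type*} [Fintype ι] (L : Submodule ℤ (ι → ℝ)) (i : ℕ) :
    succMin L i = sInf (SMset L i) := rfl

section Lattice
variable {ι : Type*} [Fintype ι] [DecidableEq ι]

private lemma sum_smul_col (M : Matrix ι ι ℝ) (c : ι → ℝ) :
    ∑ j, c j • (fun i => M i j) = M.mulVec c := by
  funext i
  simp [Matrix.mulVec, dotProduct, Finset.sum_apply, mul_comm]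

private lemma mem_colLattice_iff (M : Matrix ι ι ℝ) {x : ι → ℝ} :
    x ∈ colLattice M ↔ ∃ z : ι → ℤ, M.mulVec (fun i => (z i : ℝ)) = x := by
  rw [colLattice, mem_span_range_iff_exists_fun]
  constructor
  · rintro ⟨c, hc⟩
    refine ⟨c, ?_⟩
    rw [← hc, ← sum_smul_col M (fun i => (c i : ℝ))]
    refine Finset.sum_congr rfl fun j _ => ?_
    rw [Int.cast_smul_eq_zsmul]
  · rintro ⟨z, hz⟩
    refine ⟨z, ?_⟩
    rw [← hz, ← sum_smul_col M (fun i => (z i : ℝ))]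
    refine Finset.sum_congr rfl fun j _ => ?_
    rw [Int.cast_smul_eq_zsmul]

private lemma cols_linearIndependent (M : Matrix ι ι ℝ) (hM : IsUnit M.det) :
    LinearIndependent ℝ (fun j => fun i => M i j) := by
  rw [Fintype.linearIndependent_iff]
  intro c hc j
  rw [sum_smul_col] at hc
  have h1 : M⁻¹.mulVec (M.mulVec c) = c := by
    rw [Matrix.mulVec_mulVec, Matrix.nonsing_inv_mul M hM, Matrix.one_mulVec]
  rw [hc, Matrix.mulVec_zero] at h1
  exact (congrFun h1 j).symm

private lemma SMset_nonempty {d : ℕ} (hd : Fintype.card ι = d)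
    (M : Matrix ι ι ℝ) (hM : IsUnit M.det) : (SMset (colLattice M) d).Nonempty := by
  set e : Fin d → ι := ⇑(Fintype.equivFinOfCardEq hd).symm with hedef
  set r0 : ℝ := Real.sqrt (∑ i, ∑ j, M i j ^ 2) + 1 with hr0def
  have hr0 : 0 < r0 := by positivity
  refine ⟨r0, hr0, fun j => fun i => M i (e j), fun j => Submodule.subset_span ⟨e j, rfl⟩,
    (cols_linearIndependent M hM).comp e (Fintype.equivFinOfCardEq hd).symm.injective,
    fun j => ?_⟩
  rw [euclNorm, hr0def]
  have h1 : ∑ i, M i (e j) ^ 2 ≤ ∑ i, ∑ j', M i j' ^ 2 :=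
    Finset.sum_le_sum fun i _ =>
      Finset.single_le_sum (fun j' _ => sq_nonneg (M i j')) (Finset.mem_univ (e j))
  linarith [Real.sqrt_le_sqrt h1]

private lemma SMset_lowerbound {d : ℕ} (hd0 : 0 < d)
    (M : Matrix ι ι ℝ) (hM : IsUnit M.det) :
    ∃ c : ℝ, 0 < c ∧ ∀ r ∈ SMset (colLattice M) d, c ≤ r := by
  set C : ℝ := (∑ j, ∑ k, |M⁻¹ j k|) + 1 with hCdef
  have hC : 0 < C := by positivity
  refine ⟨C⁻¹, by positivity, ?_⟩
  rintro r ⟨hr, v, hmem, hli, hnorm⟩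
  set v0 : ι → ℝ := v ⟨0, hd0⟩ with hv0def
  have hv0 : v0 ≠ 0 := hli.ne_zero _
  obtain ⟨z, hz⟩ := (mem_colLattice_iff M).mp (hmem ⟨0, hd0⟩)
  rw [← hv0def] at hz
  have hzne : ∃ j, z j ≠ 0 := by
    by_contra h
    push_neg at h
    have hzz : (fun i => (z i : ℝ)) = 0 := by funext i; simp [h i]
    rw [hzz, Matrix.mulVec_zero] at hz
    exact hv0 hz.symm
  obtain ⟨j, hj⟩ := hzne
  have hrec : (fun i => (z i : ℝ)) = M⁻¹.mulVec v0 := by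
    rw [← hz, Matrix.mulVec_mulVec, Matrix.nonsing_inv_mul M hM, Matrix.one_mulVec]
  have h1 : (1 : ℝ) ≤ |(z j : ℝ)| := by exact_mod_cast Int.one_le_abs hj
  have hEnn : 0 ≤ euclNorm v0 := euclNorm_nonneg v0
  have h2 : |(z j : ℝ)| ≤ (∑ k, |M⁻¹ j k|) * euclNorm v0 := by
    rw [congrFun hrec j]
    calc |M⁻¹.mulVec v0 j| ≤ ∑ k, |M⁻¹ j k * v0 k| := Finset.abs_sum_le_sum_abs _ _
      _ ≤ ∑ k, |M⁻¹ j k| * euclNorm v0 := Finset.sum_le_sum fun k _ => by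
          rw [abs_mul]
          exact mul_le_mul_of_nonneg_left (abs_coord_le_euclNorm v0 k) (abs_nonneg _)
      _ = (∑ k, |M⁻¹ j k|) * euclNorm v0 := by rw [Finset.sum_mul]
  have h3 : euclNorm v0 ≤ r := hnorm _
  have h4 : (∑ k, |M⁻¹ j k|) ≤ C := by
    rw [hCdef]
    have : (∑ k, |M⁻¹ j k|) ≤ ∑ j', ∑ k, |M⁻¹ j' k| :=
      Finset.single_le_sum (f := fun j' => ∑ k, |M⁻¹ j' k|)
        (fun j' _ => Finset.sum_nonneg fun k _ => abs_nonneg _) (Finset.mem_univ j)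
    linarith
  have hS0 : 0 ≤ ∑ k, |M⁻¹ j k| := Finset.sum_nonneg fun k _ => abs_nonneg _
  have h5 : (1 : ℝ) ≤ C * r :=
    calc (1 : ℝ) ≤ |(z j : ℝ)| := h1
      _ ≤ (∑ k, |M⁻¹ j k|) * euclNorm v0 := h2
      _ ≤ (∑ k, |M⁻¹ j k|) * r := mul_le_mul_of_nonneg_left h3 hS0
      _ ≤ C * r := mul_le_mul_of_nonneg_right h4 hr.le
  rw [inv_eq_one_div, div_le_iff₀ hC]
  linarith [h5]

end Lattice

private lemma AQ_det_pos (m n : ℕ) {Q : ℝ} (hQ : 0 < Q) : 0 < (AQ m n Q).det := by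
  rw [AQ, Matrix.det_diagonal]
  refine Finset.prod_pos fun i _ => ?_
  cases i with
  | inl a => simpa using Real.rpow_pos_of_pos hQ _
  | inr b => simpa using Real.rpow_pos_of_pos hQ _

/-- **Key step of the proof of Theorem 1(a).** Let `U ∈ SL(d,ℝ)`, `R > 0`,
`P = ((1 + n⁻¹)√d · λ_d(A_R U ℤ^d))^n` and `Q = P·R`.  Then every translated box
`w + ((0,1]^n × (0, P^{d/(mn)}]^m)` contains a point of the lattice `A_Q U ℤ^d`. -/
theorem translated_box_contains_lattice_point (m n : ℕ) (hm : 1 ≤ m) (hn : 1 ≤ n)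
    (U : Matrix (Fin n ⊕ Fin m) (Fin n ⊕ Fin m) ℝ) (hU : U.det = 1)
    (R : ℝ) (hR : 0 < R) (P Q : ℝ)
    (hP : P = ((1 + (n : ℝ)⁻¹) * Real.sqrt ((m + n : ℕ) : ℝ)
        * succMin (colLattice (AQ m n R * U)) (m + n)) ^ n)
    (hQ : Q = P * R) :
    ∀ w : Fin n ⊕ Fin m → ℝ, ∃ ζ : Fin n ⊕ Fin m → ℤ,
      (∀ i : Fin n,
        w (Sum.inl i) < (AQ m n Q * U).mulVec (fun s => (ζ s : ℝ)) (Sum.inl i) ∧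
        (AQ m n Q * U).mulVec (fun s => (ζ s : ℝ)) (Sum.inl i) ≤ w (Sum.inl i) + 1) ∧
      (∀ j : Fin m,
        w (Sum.inr j) < (AQ m n Q * U).mulVec (fun s => (ζ s : ℝ)) (Sum.inr j) ∧
        (AQ m n Q * U).mulVec (fun s => (ζ s : ℝ)) (Sum.inr j)
          ≤ w (Sum.inr j) + P ^ ((((m + n : ℕ) : ℝ)) / ((m : ℝ) * (n : ℝ)))) := by
  intro w
  classical
  set M : Matrix (Fin n ⊕ Fin m) (Fin n ⊕ Fin m) ℝ := AQ m n R * U with hMdef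
  have hMdet : IsUnit M.det := by
    rw [hMdef, Matrix.det_mul, hU, mul_one]
    exact (AQ_det_pos m n hR).ne'.isUnit
  have hcard : Fintype.card (Fin n ⊕ Fin m) = m + n := by simp [add_comm]
  have hd0 : 0 < m + n := by omega
  set lam : ℝ := succMin (colLattice M) (m + n) with hlamdef
  have hSinf : lam = sInf (SMset (colLattice M) (m + n)) := rfl
  have hSne := SMset_nonempty hcard M hMdet
  obtain ⟨c0, hc0, hlb⟩ := SMset_lowerbound hd0 M hMdet
  have hBdd : BddBelow (SMset (colLattice M) (m + n)) := ⟨c0, fun r hr => hlb r hr⟩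
  have hlam_pos : 0 < lam := lt_of_lt_of_le hc0 (by rw [hSinf]; exact le_csInf hSne hlb)
  have hn0 : (n : ℝ) ≠ 0 := Nat.cast_ne_zero.mpr (by omega)
  have hm0 : (m : ℝ) ≠ 0 := Nat.cast_ne_zero.mpr (by omega)
  have hnpos : (0 : ℝ) < (n : ℝ)⁻¹ := by positivity
  have hdR : (0 : ℝ) < ((m + n : ℕ) : ℝ) := by exact_mod_cast hd0
  set sq : ℝ := Real.sqrt ((m + n : ℕ) : ℝ) with hsqdef
  have hsqpos : 0 < sq := Real.sqrt_pos.mpr hdR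
  set σ : ℝ := (1 + (n : ℝ)⁻¹) * sq * lam with hσdef
  have hσpos : 0 < σ := by
    refine mul_pos (mul_pos ?_ hsqpos) hlam_pos
    positivity
  have hP0 : 0 < P := by rw [hP]; exact pow_pos hσpos n
  have hQ0 : 0 < Q := by rw [hQ]; exact mul_pos hP0 hR
  have hlt : sInf (SMset (colLattice M) (m + n)) < (1 + (n : ℝ)⁻¹) * lam := by
    rw [← hSinf]
    nlinarith [hlam_pos, hnpos]
  obtain ⟨s, hsS, hslt⟩ := (csInf_lt_iff hBdd hSne).mp hlt
  obtain ⟨hspos, v, hvmem, hvli, hvnorm⟩ := hsS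
  have hPn' : P ^ ((n : ℝ)⁻¹) = σ := by
    rw [hP, ← Real.rpow_natCast σ n, ← Real.rpow_mul hσpos.le, mul_inv_cancel₀ hn0,
      Real.rpow_one]
  have hPn : P ^ (-(n : ℝ)⁻¹) = σ⁻¹ := by rw [Real.rpow_neg hP0.le, hPn']
  set τ : ℝ := P ^ ((m : ℝ)⁻¹) with hτdef
  have hτpos : 0 < τ := Real.rpow_pos_of_pos hP0 _
  have hτ0 : τ ≠ 0 := hτpos.ne'
  have hPd : P ^ (((m + n : ℕ) : ℝ) / ((m : ℝ) * (n : ℝ))) = τ * σ := by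
    have he : ((m + n : ℕ) : ℝ) / ((m : ℝ) * (n : ℝ)) = (m : ℝ)⁻¹ + (n : ℝ)⁻¹ := by
      push_cast
      field_simp
      ring
    rw [he, Real.rpow_add hP0, hPn', hτdef]
  set x : (Fin n ⊕ Fin m) → ℝ :=
    Sum.elim (fun i => w (Sum.inl i) * σ + σ / 2)
      (fun j => w (Sum.inr j) * τ⁻¹ + σ / 2) with hxdef
  obtain ⟨k, hk⟩ := covering_pi hcard hd0 v hvli hvnorm x
  set p : (Fin n ⊕ Fin m) → ℝ := ∑ i, (k i : ℝ) • v i with hpdef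
  have hcov : euclNorm (x - p) < σ / 2 := by
    have hsq2 : sq ^ 2 = ((m + n : ℕ) : ℝ) := Real.sq_sqrt hdR.le
    have hs2 : s ^ 2 < ((1 + (n : ℝ)⁻¹) * lam) ^ 2 := by
      have := pow_lt_pow_left₀ hslt hspos.le (n := 2) (by norm_num)
      exact this
    have hrhs : ((m + n : ℕ) : ℝ) * s ^ 2 / 4 < (σ / 2) ^ 2 := by
      rw [hσdef]
      nlinarith [hsq2, hs2, hdR]
    have h2 := lt_of_le_of_lt hk hrhs
    exact lt_of_pow_lt_pow_left₀ 2 (by positivity) h2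
  have hcoord : ∀ i, |x i - p i| < σ / 2 := fun i => by
    have h := abs_coord_le_euclNorm (x - p) i
    rw [Pi.sub_apply] at h
    exact lt_of_le_of_lt h hcov
  have hpL : p ∈ colLattice M := by
    rw [hpdef]
    refine Submodule.sum_mem _ fun i _ => ?_
    rw [Int.cast_smul_eq_zsmul]
    exact Submodule.smul_mem _ _ (hvmem i)
  obtain ⟨ζ, hζ⟩ := (mem_colLattice_iff M).mp hpL
  have hAQQ : AQ m n Q = AQ m n P * AQ m n R := by
    have hvec : (Sum.elim (fun _ : Fin n => Q ^ (-(n : ℝ)⁻¹)) (fun _ : Fin m => Q ^ ((m : ℝ)⁻¹)))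
        = (Sum.elim (fun _ : Fin n => P ^ (-(n : ℝ)⁻¹)) (fun _ : Fin m => P ^ ((m : ℝ)⁻¹)))
          * (Sum.elim (fun _ : Fin n => R ^ (-(n : ℝ)⁻¹)) (fun _ : Fin m => R ^ ((m : ℝ)⁻¹))) := by
      funext i
      cases i with
      | inl a =>
        simp only [Pi.mul_apply, Sum.elim_inl]
        rw [hQ]
        exact Real.mul_rpow hP0.le hR.le
      | inr b =>
        simp only [Pi.mul_apply, Sum.elim_inr]
        rw [hQ]
        exact Real.mul_rpow hP0.le hR.le
    simp only [AQ, Matrix.diagonal_mul_diagonal]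
    rw [hvec]
    rfl
  have hmv : (AQ m n Q * U).mulVec (fun s => (ζ s : ℝ)) = (AQ m n P).mulVec p := by
    rw [hAQQ, Matrix.mul_assoc, ← Matrix.mulVec_mulVec, ← hMdef, hζ]
  refine ⟨ζ, fun i => ?_, fun j => ?_⟩
  · have key : (AQ m n Q * U).mulVec (fun s => (ζ s : ℝ)) (Sum.inl i)
        = σ⁻¹ * p (Sum.inl i) := by
      rw [hmv]
      simp only [AQ, Matrix.mulVec_diagonal, Sum.elim_inl, hPn]
    have h := hcoord (Sum.inl i)
    have hxi : x (Sum.inl i) = w (Sum.inl i) * σ + σ / 2 := rfl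
    rw [abs_lt, hxi] at h
    obtain ⟨h1, h2⟩ := h
    rw [key]
    constructor
    · have hp1 : w (Sum.inl i) * σ < p (Sum.inl i) := by linarith
      calc w (Sum.inl i) = σ⁻¹ * (w (Sum.inl i) * σ) := by field_simp
        _ < σ⁻¹ * p (Sum.inl i) := mul_lt_mul_of_pos_left hp1 (inv_pos.mpr hσpos)
    · have hp2 : p (Sum.inl i) < w (Sum.inl i) * σ + σ := by linarith
      have h3 : σ⁻¹ * p (Sum.inl i) < σ⁻¹ * (w (Sum.inl i) * σ + σ) :=
        mul_lt_mul_of_pos_left hp2 (inv_pos.mpr hσpos)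
      have heq2 : σ⁻¹ * (w (Sum.inl i) * σ + σ) = w (Sum.inl i) + 1 := by
        field_simp
      linarith [h3, heq2.le]
  · have key : (AQ m n Q * U).mulVec (fun s => (ζ s : ℝ)) (Sum.inr j)
        = τ * p (Sum.inr j) := by
      rw [hmv]
      simp only [AQ, Matrix.mulVec_diagonal, Sum.elim_inr, ← hτdef]
    have h := hcoord (Sum.inr j)
    have hxj : x (Sum.inr j) = w (Sum.inr j) * τ⁻¹ + σ / 2 := rfl
    rw [abs_lt, hxj] at h
    obtain ⟨h1, h2⟩ := h
    rw [key, hPd]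
    constructor
    · have hp1 : w (Sum.inr j) * τ⁻¹ < p (Sum.inr j) := by linarith
      calc w (Sum.inr j) = τ * (w (Sum.inr j) * τ⁻¹) := by field_simp
        _ < τ * p (Sum.inr j) := mul_lt_mul_of_pos_left hp1 hτpos
    · have hp2 : p (Sum.inr j) < w (Sum.inr j) * τ⁻¹ + σ := by linarith
      have h3 : τ * p (Sum.inr j) < τ * (w (Sum.inr j) * τ⁻¹ + σ) :=
        mul_lt_mul_of_pos_left hp2 hτpos
      have heq2 : τ * (w (Sum.inr j) * τ⁻¹ + σ) = w (Sum.inr j) + τ * σ := by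
        field_simp
      linarith [h3, heq2.le]
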